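/- arXiv:2103.12585 — 2 statements merged into one kernel-verified Lean document; each statement's English description precedes it below -/
import Mathlib

section
/- Let K ⊆ ℝ^m be a nonempty compact convex set and F : K → ℝ^m a continuous monotone mapping. Then the solution set S := {x ∈ K : (y − x)ᵀ F(x) ≥ 0 for all y ∈ K} of the variational inequality VI(K, F) is nonempty, compact, and convex. -/
open Matrix Finset


/-- Symmetric-game lemma: if `A i j + A j i ≤ 0` for all `i j`, then there is a
probability vector `p` with `∑ j, A i j * p j ≤ 0` for every `i`. -/
lemma exists_good_strategy {ι : Type*} [Fintype ι] [DecidableEq ι] [Nonempty ι]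
    (A : ι → ι → ℝ) (hA : ∀ i j, A i j + A j i ≤ 0) :
    ∃ p : ι → ℝ, (∀ i, 0 ≤ p i) ∧ (∑ i, p i = 1) ∧ ∀ i, ∑ j, A i j * p j ≤ 0 := by
  by_contra hcon
  push_neg at hcon
  -- the linear map `p ↦ A p`
  set L : (ι → ℝ) →ₗ[ℝ] (ι → ℝ) :=
    { toFun := fun p i => ∑ j, A i j * p j
      map_add' := by
        intro p q; funext i
        simp [mul_add, Finset.sum_add_distrib]
      map_smul' := by
        intro c p; funext i
        simp only [smul_eq_mul, Pi.smul_apply, RingHom.id_apply, Finset.mul_sum]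
        exact Finset.sum_congr rfl fun j _ => by ring } with hL
  have hLcont : Continuous L := by
    apply continuous_pi
    intro i
    exact continuous_finset_sum _ fun j _ => continuous_const.mul (continuous_apply j)
  set S : Set (ι → ℝ) := L '' stdSimplex ℝ ι with hS
  set T : Set (ι → ℝ) := ⋂ i, {x : ι → ℝ | x i ≤ 0} with hT
  have hSconv : Convex ℝ S := (convex_stdSimplex ℝ ι).linear_image L
  have hScomp : IsCompact S := (isCompact_stdSimplex ℝ ι).image hLcont
  have hTconv : Convex ℝ T :=
    convex_iInter fun i => convex_halfSpace_le ⟨fun a b => rfl, fun c a => rfl⟩ 0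
  have hTclosed : IsClosed T :=
    isClosed_iInter fun i => isClosed_le (continuous_apply i) continuous_const
  have hdisj : Disjoint S T := by
    rw [Set.disjoint_left]
    rintro z ⟨p, hp, rfl⟩ hzT
    simp only [hT, Set.mem_iInter, Set.mem_setOf_eq] at hzT
    obtain ⟨i, hi⟩ := hcon p hp.1 hp.2
    exact absurd (hzT i) (not_le.mpr hi)
  obtain ⟨f, u, v, hfu, huv, hfv⟩ :=
    geometric_hahn_banach_compact_closed hSconv hScomp hTconv hTclosed hdisj
  have hT0 : (0 : ι → ℝ) ∈ T := by simp [hT]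
  have hv0 : v < 0 := by simpa using hfv 0 hT0
  -- coordinates of the functional
  set q : ι → ℝ := fun i => -f (fun j => if i = j then 1 else 0) with hq
  have hfx : ∀ x : ι → ℝ, f x = ∑ i, x i * (-(q i)) := by
    intro x
    have := (f : (ι → ℝ) →ₗ[ℝ] ℝ).pi_apply_eq_sum_univ x
    simpa [hq, smul_eq_mul] using this
  have hqnn : ∀ i, 0 ≤ q i := by
    intro i
    by_contra hqi
    push_neg at hqi
    -- so f(e i) > 0; take b = -t • e i ∈ T with t large
    set pi := f (fun j => if i = j then 1 else 0) with hpi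
    have hpip : 0 < pi := by simpa [hq, neg_neg] using neg_pos.mpr hqi
    set t : ℝ := max 0 (-v / pi) with ht
    have ht0 : 0 ≤ t := le_max_left _ _
    have hbT : (-t • fun j => if i = j then (1:ℝ) else 0) ∈ T := by
      simp only [hT, Set.mem_iInter, Set.mem_setOf_eq]
      intro j
      by_cases h : i = j <;> simp [h, Pi.smul_apply, neg_nonpos, ht0]
    have hvt : v < -t * pi := by
      have h := hfv _ hbT
      rwa [ContinuousLinearMap.map_smul, smul_eq_mul, ← hpi] at h
    have h2 : -v / pi ≤ t := le_max_right _ _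
    have h3 : -v ≤ t * pi := (div_le_iff₀ hpip).mp h2
    linarith
  -- q ≠ 0
  have hSne : S.Nonempty := by
    refine ⟨L (fun _ => (Fintype.card ι : ℝ)⁻¹), Set.mem_image_of_mem _ ?_⟩
    constructor
    · intro i; positivity
    · have hcard : (Fintype.card ι : ℝ) ≠ 0 := Nat.cast_ne_zero.mpr Fintype.card_ne_zero
      simp [Finset.sum_const, Finset.card_univ, nsmul_eq_mul, mul_inv_cancel₀ hcard]
  have hqsum : 0 < ∑ i, q i := by
    rcases hSne with ⟨a, haS⟩
    have hfa : f a < u := hfu a haS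
    by_contra hs
    push_neg at hs
    have : ∀ i, q i = 0 := by
      intro i
      have := Finset.sum_nonneg (fun j (_ : j ∈ Finset.univ) => hqnn j)
      have hall : ∑ i, q i = 0 := le_antisymm hs this
      exact (Finset.sum_eq_zero_iff_of_nonneg (fun j _ => hqnn j)).mp hall i (Finset.mem_univ i)
    have hf0 : f a = 0 := by rw [hfx]; simp [this]
    linarith
  -- the normalized q is in the simplex; evaluate
  set s : ℝ := ∑ i, q i with hs
  have hps : (fun i => q i / s) ∈ stdSimplex ℝ ι := by
    constructor
    · intro i; exact div_nonneg (hqnn i) hqsum.le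
    · rw [← Finset.sum_div]; field_simp; exact hs.symm
  have hfa : f (L (fun i => q i / s)) < u := hfu _ (Set.mem_image_of_mem _ hps)
  have hD : 0 < ∑ i, ∑ j, q i * (A i j * q j) := by
    have hneg : f (L (fun i => q i / s)) < 0 := lt_trans hfa (lt_trans huv hv0)
    rw [hfx] at hneg
    have hexp : ∑ i, (L (fun k => q k / s)) i * (-(q i))
        = -(s⁻¹ * ∑ i, ∑ j, q i * (A i j * q j)) := by
      simp only [hL, LinearMap.coe_mk, AddHom.coe_mk]
      rw [Finset.mul_sum, ← Finset.sum_neg_distrib]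
      refine Finset.sum_congr rfl fun i _ => ?_
      rw [Finset.sum_mul, Finset.mul_sum, ← Finset.sum_neg_distrib]
      refine Finset.sum_congr rfl fun j _ => ?_
      rw [div_eq_mul_inv]
      ring
    rw [hexp] at hneg
    have hsinv : 0 < s⁻¹ := inv_pos.mpr hqsum
    nlinarith
  -- but symmetry makes this sum nonpositive
  have hD' : ∑ i, ∑ j, q i * (A i j * q j) ≤ 0 := by
    have h2 : (∑ i, ∑ j, q i * (A i j * q j)) + (∑ i, ∑ j, q i * (A i j * q j))
        = ∑ i, ∑ j, q i * q j * (A i j + A j i) := by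
      have swap : (∑ i, ∑ j, q i * (A i j * q j)) = ∑ i, ∑ j, q j * (A j i * q i) :=
        Finset.sum_comm
      nth_rewrite 1 [swap]
      rw [← Finset.sum_add_distrib]
      apply Finset.sum_congr rfl; intro i _
      rw [← Finset.sum_add_distrib]
      apply Finset.sum_congr rfl; intro j _; ring
    have hterm : ∑ i, ∑ j, q i * q j * (A i j + A j i) ≤ 0 := by
      apply Finset.sum_nonpos; intro i _
      apply Finset.sum_nonpos; intro j _
      exact mul_nonpos_of_nonneg_of_nonpos (mul_nonneg (hqnn i) (hqnn j)) (hA i j)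
    linarith
  linarith



lemma sum_dotProduct'' {ι n : Type*} [Fintype ι] [Fintype n] (f : ι → n → ℝ) (w : n → ℝ) :
    (∑ j, f j) ⬝ᵥ w = ∑ j, (f j) ⬝ᵥ w := by
  simp only [dotProduct, Finset.sum_apply, Finset.sum_mul]
  exact Finset.sum_comm

/-- A weak (Minty) solution exists for any finite subfamily of points of `K`. -/
lemma finite_weak_solution {m : ℕ} {K : Set (Fin m → ℝ)} (hKconv : Convex ℝ K)
    {F : (Fin m → ℝ) → (Fin m → ℝ)}
    (hFmono : ∀ x ∈ K, ∀ y ∈ K, 0 ≤ (F x - F y) ⬝ᵥ (x - y))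
    {ι : Type*} [Fintype ι] [Nonempty ι] (y : ι → (Fin m → ℝ)) (hy : ∀ i, y i ∈ K) :
    ∃ x ∈ K, ∀ i, 0 ≤ (y i - x) ⬝ᵥ F (y i) := by
  classical
  set A : ι → ι → ℝ := fun i j => (y j - y i) ⬝ᵥ F (y i) with hA
  have hAsym : ∀ i j, A i j + A j i ≤ 0 := by
    intro i j
    have hkey : A i j + A j i = -((F (y i) - F (y j)) ⬝ᵥ (y i - y j)) := by
      simp only [hA, dotProduct, Pi.sub_apply]
      rw [← Finset.sum_add_distrib, ← Finset.sum_neg_distrib]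
      exact Finset.sum_congr rfl fun k _ => by ring
    have := hFmono (y i) (hy i) (y j) (hy j)
    linarith
  obtain ⟨p, hp0, hp1, hAp⟩ := exists_good_strategy A hAsym
  refine ⟨∑ j, p j • y j, hKconv.sum_mem (fun j _ => hp0 j) hp1 (fun j _ => hy j), ?_⟩
  intro i
  have hx : y i - ∑ j, p j • y j = ∑ j, p j • (y i - y j) := by
    simp_rw [smul_sub]
    rw [Finset.sum_sub_distrib, ← Finset.sum_smul, hp1, one_smul]
  rw [hx, sum_dotProduct'']
  have : ∀ j, (p j • (y i - y j)) ⬝ᵥ F (y i) = -(A i j * p j) := by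
    intro j
    rw [smul_dotProduct, smul_eq_mul]
    have : (y i - y j) ⬝ᵥ F (y i) = -A i j := by
      rw [hA]; rw [← neg_dotProduct, neg_sub]
    rw [this]; ring
  rw [Finset.sum_congr rfl fun j _ => this j, Finset.sum_neg_distrib]
  simpa using hAp i

/-- Minty's lemma: a weak solution is a strong solution. -/
lemma minty_weak_to_strong {m : ℕ} {K : Set (Fin m → ℝ)} (hKconv : Convex ℝ K)
    {F : (Fin m → ℝ) → (Fin m → ℝ)} (hFcont : Continuous F)
    {x : Fin m → ℝ} (hx : x ∈ K) (hweak : ∀ y ∈ K, 0 ≤ (y - x) ⬝ᵥ F y) :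
    ∀ y ∈ K, 0 ≤ (y - x) ⬝ᵥ F x := by
  intro y hy
  set g : ℝ → ℝ := fun t => (y - x) ⬝ᵥ F (x + t • (y - x)) with hg
  have hgcont : Continuous g := by
    apply continuous_finset_sum
    intro i _
    exact continuous_const.mul <| (continuous_apply i).comp <| hFcont.comp <|
      continuous_const.add (continuous_id.smul continuous_const)
  have hg0 : g 0 = (y - x) ⬝ᵥ F x := by simp [hg]
  have hpos : ∀ t ∈ Set.Ioo (0:ℝ) 1, 0 ≤ g t := by
    rintro t ⟨ht0, ht1⟩
    set z : Fin m → ℝ := x + t • (y - x) with hz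
    have hzK : z ∈ K := by
      have : z = (1 - t) • x + t • y := by
        rw [hz]; module
      rw [this]
      exact hKconv hx hy (by linarith) ht0.le (by ring)
    have hw := hweak z hzK
    have hzx : z - x = t • (y - x) := by rw [hz]; abel
    rw [hzx, smul_dotProduct, smul_eq_mul] at hw
    exact (mul_nonneg_iff_of_pos_left ht0).mp hw
  have htend : Filter.Tendsto g (nhdsWithin 0 (Set.Ioi 0)) (nhds (g 0)) :=
    (hgcont.tendsto 0).mono_left nhdsWithin_le_nhds
  have hev : ∀ᶠ t in nhdsWithin 0 (Set.Ioi 0), 0 ≤ g t :=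
    Filter.eventually_of_mem (Ioo_mem_nhdsGT_of_mem (by norm_num : (0:ℝ) ∈ Set.Ico 0 1)) hpos
  have := ge_of_tendsto htend hev
  rwa [hg0] at this


open Matrix Finset in
/-- For a nonempty compact convex `K ⊆ ℝ^m` and a continuous monotone `F`,
the solution set of `VI(K, F)` is nonempty, compact and convex. -/
theorem VI_solution_set_nonempty_compact_convex (m : ℕ) (K : Set (Fin m → ℝ))
    (hKne : K.Nonempty) (hKc : IsCompact K) (hKconv : Convex ℝ K)
    (F : (Fin m → ℝ) → (Fin m → ℝ)) (hFcont : Continuous F)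
    (hFmono : ∀ x ∈ K, ∀ y ∈ K, 0 ≤ (F x - F y) ⬝ᵥ (x - y)) :
    ({x ∈ K | ∀ y ∈ K, 0 ≤ (y - x) ⬝ᵥ F x}).Nonempty ∧
    IsCompact {x ∈ K | ∀ y ∈ K, 0 ≤ (y - x) ⬝ᵥ F x} ∧
    Convex ℝ {x ∈ K | ∀ y ∈ K, 0 ≤ (y - x) ⬝ᵥ F x} := by
  classical
  set t : K → Set (Fin m → ℝ) := fun y => {x | 0 ≤ ((y : Fin m → ℝ) - x) ⬝ᵥ F y} with ht
  have hclosed : ∀ y : K, IsClosed (t y) := by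
    intro y
    apply isClosed_le continuous_const
    exact continuous_finset_sum _ fun i _ =>
      (continuous_const.sub (continuous_apply i)).mul continuous_const
  have hconvex : ∀ y : K, Convex ℝ (t y) := by
    intro y
    have heq : t y = {x | x ⬝ᵥ F (y : Fin m → ℝ) ≤ (y : Fin m → ℝ) ⬝ᵥ F y} := by
      ext x
      simp [ht, sub_dotProduct, sub_nonneg]
    rw [heq]
    exact convex_halfSpace_le
      ⟨fun a b => add_dotProduct a b _, fun c a => smul_dotProduct c a _⟩ _
  have hW : (K ∩ ⋂ y : K, t y).Nonempty := by
    apply hKc.inter_iInter_nonempty t hclosed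
    intro u
    rcases u.eq_empty_or_nonempty with rfl | ⟨y0, hy0⟩
    · simpa using hKne
    · haveI : Nonempty ↥u := ⟨⟨y0, hy0⟩⟩
      obtain ⟨x, hxK, hx⟩ := finite_weak_solution hKconv hFmono
        (fun i : ↥u => ((i : K) : Fin m → ℝ)) (fun i => (i : K).2)
      refine ⟨x, hxK, ?_⟩
      simp only [Set.mem_iInter]
      intro y hy
      exact hx ⟨y, hy⟩
  have hset : {x ∈ K | ∀ y ∈ K, 0 ≤ (y - x) ⬝ᵥ F x} = K ∩ ⋂ y : K, t y := by
    ext x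
    simp only [Set.mem_sep_iff, Set.mem_inter_iff, Set.mem_iInter, ht, Set.mem_setOf_eq]
    constructor
    · rintro ⟨hxK, hstrong⟩
      refine ⟨hxK, fun y => ?_⟩
      have h1 := hstrong y y.2
      have h2 := hFmono y y.2 x hxK
      have key : (F (y : Fin m → ℝ) - F x) ⬝ᵥ ((y : Fin m → ℝ) - x)
          = ((y : Fin m → ℝ) - x) ⬝ᵥ F (y : Fin m → ℝ) - ((y : Fin m → ℝ) - x) ⬝ᵥ F x := by
        rw [dotProduct_comm, dotProduct_sub]
      linarith
    · rintro ⟨hxK, hweak⟩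
      exact ⟨hxK, minty_weak_to_strong hKconv hFcont hxK fun y hy => hweak ⟨y, hy⟩⟩
  refine ⟨?_, ?_, ?_⟩ <;> rw [hset]
  · exact hW
  · exact hKc.inter_right (isClosed_iInter hclosed)
  · exact hKconv.inter (convex_iInter hconvex)
end

section
/- Let S_{K+1} ⊆ S_K ⊆ ℝ^m be the solution sets of VI(P_{K+1}, F) and VI(P_K, F) respectively, where P_{K+1} = P_K ∩ Q for closed convex sets P_K, Q, F is continuous and monotone, and the affine hull of S_{K+1} equals ℝ^m (so S_{K+1} has nonempty interior). Then S_{K+1} = S_K ∩ Q. -/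
open Matrix

/-- Minty's lemma: for a convex set `P` and a continuous monotone map `F`, the Stampacchia
solution set equals the Minty solution set. -/
lemma minty_aux (m : ℕ) (P : Set (Fin m → ℝ)) (hPconv : Convex ℝ P)
    (F : (Fin m → ℝ) → (Fin m → ℝ)) (hFcont : Continuous F)
    (hFmono : ∀ x y : Fin m → ℝ, 0 ≤ (F x - F y) ⬝ᵥ (x - y)) :
    {x ∈ P | ∀ y ∈ P, 0 ≤ (y - x) ⬝ᵥ F x} = {x ∈ P | ∀ y ∈ P, 0 ≤ (y - x) ⬝ᵥ F y} := by
  ext x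
  simp only [Set.mem_setOf_eq]
  constructor
  · rintro ⟨hxP, hx⟩
    refine ⟨hxP, fun y hy => ?_⟩
    have h1 := hx y hy
    have h2 := hFmono y x
    have : (F y - F x) ⬝ᵥ (y - x) = (y - x) ⬝ᵥ F y - (y - x) ⬝ᵥ F x := by
      rw [sub_dotProduct, dotProduct_comm, dotProduct_comm (F x)]
    linarith [this ▸ h2]
  · rintro ⟨hxP, hx⟩
    refine ⟨hxP, fun y hy => ?_⟩
    -- consider points x + t • (y - x) for small t > 0
    set g : ℝ → ℝ := fun t => (y - x) ⬝ᵥ F (x + t • (y - x)) with hg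
    have hgc : Continuous g := by
      exact Continuous.dotProduct continuous_const (hFcont.comp (by continuity))
    have hmem : ∀ t ∈ Set.Icc (0:ℝ) 1, x + t • (y - x) ∈ P := by
      intro t ht
      have : x + t • (y - x) = (1 - t) • x + t • y := by
        module
      rw [this]
      exact hPconv hxP hy (by linarith [ht.2]) ht.1 (by ring)
    have key : ∀ t ∈ Set.Ioc (0:ℝ) 1, 0 ≤ g t := by
      intro t ht
      have hz := hx _ (hmem t ⟨le_of_lt ht.1, ht.2⟩)
      have : (x + t • (y - x)) - x = t • (y - x) := by abel
      rw [this, smul_dotProduct] at hz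
      exact (mul_nonneg_iff_of_pos_left ht.1).mp hz
    have hlim : Filter.Tendsto g (nhdsWithin 0 (Set.Ioi 0)) (nhds (g 0)) :=
      (hgc.tendsto 0).mono_left nhdsWithin_le_nhds
    have h0 : 0 ≤ g 0 := by
      refine ge_of_tendsto hlim ?_
      filter_upwards [Ioc_mem_nhdsGT (by norm_num : (0:ℝ) < 1)] with t ht
      exact key t ht
    simpa [hg] using h0

/-- Lemma 2 of the paper: if the solution set of the intersected VI is full-dimensional,
then `S(P_K ∩ Q) = S(P_K) ∩ Q`. -/
theorem VI_solution_set_intersection (m : ℕ) (PK Q : Set (Fin m → ℝ))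
    (hPne : PK.Nonempty) (hPc : IsCompact PK) (hPconv : Convex ℝ PK)
    (hQclosed : IsClosed Q) (hQconv : Convex ℝ Q) (hne : (PK ∩ Q).Nonempty)
    (F : (Fin m → ℝ) → (Fin m → ℝ)) (hFcont : Continuous F)
    (hFmono : ∀ x y : Fin m → ℝ, 0 ≤ (F x - F y) ⬝ᵥ (x - y))
    (haff : affineSpan ℝ {x ∈ PK ∩ Q | ∀ y ∈ PK ∩ Q, 0 ≤ (y - x) ⬝ᵥ F x} = ⊤) :
    {x ∈ PK ∩ Q | ∀ y ∈ PK ∩ Q, 0 ≤ (y - x) ⬝ᵥ F x} =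
      {x ∈ PK | ∀ y ∈ PK, 0 ≤ (y - x) ⬝ᵥ F x} ∩ Q := by
  set S' := {x ∈ PK ∩ Q | ∀ y ∈ PK ∩ Q, 0 ≤ (y - x) ⬝ᵥ F x} with hS'
  -- S' is convex, via Minty's lemma
  have hconv : Convex ℝ S' := by
    rw [hS', minty_aux m (PK ∩ Q) (hPconv.inter hQconv) F hFcont hFmono]
    intro x₁ hx₁ x₂ hx₂ a b ha hb hab
    refine ⟨(hPconv.inter hQconv) hx₁.1 hx₂.1 ha hb hab, fun y hy => ?_⟩
    have h1 := hx₁.2 y hy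
    have h2 := hx₂.2 y hy
    have : y - (a • x₁ + b • x₂) = a • (y - x₁) + b • (y - x₂) := by
      have h := hab
      have : y = (a + b) • y := by rw [h, one_smul]
      nth_rewrite 1 [this]
      module
    rw [this, add_dotProduct, smul_dotProduct, smul_dotProduct]
    have := mul_nonneg ha h1
    have := mul_nonneg hb h2
    simp only [smul_eq_mul]
    linarith
  -- S' has nonempty interior
  obtain ⟨z, hz⟩ : (interior S').Nonempty :=
    (hconv.interior_nonempty_iff_affineSpan_eq_top).mpr haff
  have hzS : z ∈ S' := interior_subset hz
  apply Set.Subset.antisymm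
  · rintro x ⟨⟨hxP, hxQ⟩, hxVI⟩
    refine ⟨⟨hxP, ?_⟩, hxQ⟩
    intro y hyP
    -- (z - x) ⬝ᵥ F x = 0
    have h1 : 0 ≤ (z - x) ⬝ᵥ F x := hxVI z hzS.1
    have h2 : 0 ≤ (x - z) ⬝ᵥ F z := hzS.2 x ⟨hxP, hxQ⟩
    have h3 := hFmono z x
    have hexp : (F z - F x) ⬝ᵥ (z - x) = (z - x) ⬝ᵥ F z - (z - x) ⬝ᵥ F x := by
      rw [sub_dotProduct, dotProduct_comm, dotProduct_comm (F x)]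
    have hneg : (x - z) ⬝ᵥ F z = -((z - x) ⬝ᵥ F z) := by
      rw [← neg_dotProduct, neg_sub]
    have hzero : (z - x) ⬝ᵥ F x = 0 := by
      rw [hexp] at h3; rw [hneg] at h2; linarith
    -- find a small perturbation of z towards y staying in Q
    have hzQ : z ∈ interior Q := interior_mono (fun w hw => hw.1.2) hz
    obtain ⟨ε, hε, hball⟩ := Metric.mem_nhds_iff.mp (mem_interior_iff_mem_nhds.mp hzQ)
    set t : ℝ := min 1 (ε / (‖y - z‖ + 1)) with ht
    have hnorm_pos : (0:ℝ) < ‖y - z‖ + 1 := by positivity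
    have ht0 : 0 < t := lt_min one_pos (by positivity)
    have ht1 : t ≤ 1 := min_le_left _ _
    set w : (Fin m → ℝ) := z + t • (y - z) with hw
    have hwQ : w ∈ Q := by
      apply hball
      have : dist w z = t * ‖y - z‖ := by
        rw [hw, dist_eq_norm]
        simp [norm_smul, abs_of_pos ht0]
      rw [Metric.mem_ball, this]
      calc t * ‖y - z‖ ≤ (ε / (‖y - z‖ + 1)) * ‖y - z‖ := by
            apply mul_le_mul_of_nonneg_right (min_le_right _ _) (norm_nonneg _)
        _ < ε := by
            rw [div_mul_eq_mul_div, div_lt_iff₀ hnorm_pos]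
            nlinarith [norm_nonneg (y - z)]
    have hwP : w ∈ PK := by
      have : w = (1 - t) • z + t • y := by
        rw [hw]; module
      rw [this]
      exact hPconv hzS.1.1 hyP (by linarith) (le_of_lt ht0) (by ring)
    have hvi := hxVI w ⟨hwP, hwQ⟩
    have hwx : w - x = (z - x) + t • (y - z) := by rw [hw]; abel
    rw [hwx, add_dotProduct, hzero, zero_add, smul_dotProduct] at hvi
    have hyz : 0 ≤ (y - z) ⬝ᵥ F x := (mul_nonneg_iff_of_pos_left ht0).mp hvi
    have : y - x = (y - z) + (z - x) := by abel
    rw [this, add_dotProduct, hzero, add_zero]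
    exact hyz
  · rintro x ⟨⟨hxP, hxVI⟩, hxQ⟩
    exact ⟨⟨hxP, hxQ⟩, fun y hy => hxVI y hy.1⟩
end
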